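/- For the potential function f(t) = (1+t)^3 and the code C_θ ⊂ S^3 parametrized rationally by sinθ = 2u/(1+u²), cosθ = (1−u²)/(1+u²), the energy difference satisfies E_f(C_{D_4}) − E_f(C_θ) = −18·(u⁶ − 6u⁴ − 12u³ + 3u² − 2)²/(u²+1)⁶. In particular E_f(C_{D_4}) ≤ E_f(C_θ) for all real u. -/
import Mathlib


open Real

noncomputable def energyC (f : ℝ → ℝ) (θ : ℝ) : ℝ :=
  18 * (f 0 + f (Real.sin (2 * θ)))
    + 36 * (f (Real.sin θ) + f (Real.cos θ))
    + 36 * (f (Real.sin θ ^ 2 - Real.cos θ ^ 2 / 2) + f (Real.cos θ ^ 2 - Real.sin θ ^ 2 / 2))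
    + 72 * (f (-(Real.sin θ / 2)) + f (-(Real.cos θ / 2)) + f (Real.sin (2 * θ) / 4)
        + f (-(Real.sin (2 * θ) / 2)))
    + 84 * f (-(1/2))

noncomputable def energyD4 (f : ℝ → ℝ) : ℝ :=
  24 * f (-1) + 192 * (f (1/2) + f (-(1/2))) + 144 * f 0

theorem stmt0 (u θ : ℝ)
    (hs : Real.sin θ = 2 * u / (1 + u ^ 2))
    (hc : Real.cos θ = (1 - u ^ 2) / (1 + u ^ 2)) :
    energyD4 (fun t => (1 + t) ^ 3) - energyC (fun t => (1 + t) ^ 3) θ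
        = -18 * (u ^ 6 - 6 * u ^ 4 - 12 * u ^ 3 + 3 * u ^ 2 - 2) ^ 2 / (u ^ 2 + 1) ^ 6
      ∧ energyD4 (fun t => (1 + t) ^ 3) ≤ energyC (fun t => (1 + t) ^ 3) θ := by
  have hd : (0:ℝ) < 1 + u ^ 2 := by positivity
  have hd' : (1:ℝ) + u ^ 2 ≠ 0 := ne_of_gt hd
  have key : energyD4 (fun t => (1 + t) ^ 3) - energyC (fun t => (1 + t) ^ 3) θ
      = -18 * (u ^ 6 - 6 * u ^ 4 - 12 * u ^ 3 + 3 * u ^ 2 - 2) ^ 2 / (u ^ 2 + 1) ^ 6 := by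
    simp only [energyD4, energyC, Real.sin_two_mul, hs, hc]
    field_simp
    ring
  refine ⟨key, ?_⟩
  have h2 : -18 * (u ^ 6 - 6 * u ^ 4 - 12 * u ^ 3 + 3 * u ^ 2 - 2) ^ 2 / (u ^ 2 + 1) ^ 6 ≤ 0 := by
    apply div_nonpos_of_nonpos_of_nonneg
    · nlinarith [sq_nonneg (u ^ 6 - 6 * u ^ 4 - 12 * u ^ 3 + 3 * u ^ 2 - 2)]
    · positivity
  linarith [key]
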